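/- Let X be a finite set, S₀ ∈ ℝᵈ, S₁ : X → ℝᵈ, and Ω ⊆ X. Suppose ω* ∈ Ω is such that for every H ∈ ℝᵈ, H·(S₁(ω̃) − S₀) ≥ 0 for all ω̃ ∈ Ω implies H·(S₁(ω̃) − S₀) = 0 for all ω̃ ∈ Ω. Then there exists a probability measure Q on X supported on finitely many points of Ω with Q({ω*}) > 0 and E_Q[S₁] = S₀. -/

import Mathlib

open Finset

private def dot {d : ℕ} (H u : Fin d → ℝ) : ℝ := ∑ i, H i * u i

private lemma dot_sub_smul {d : ℕ} (H u v : Fin d → ℝ) (a : ℝ) :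
    dot H (u - a • v) = dot H u - a * dot H v := by
  simp only [dot, Pi.sub_apply, Pi.smul_apply, smul_eq_mul, mul_sub, Finset.sum_sub_distrib,
    Finset.mul_sum]
  congr 1
  exact Finset.sum_congr rfl fun i _ => by ring

private lemma dot_sub_smul_left {d : ℕ} (H₁ H₀ u : Fin d → ℝ) (a : ℝ) :
    dot (H₁ - a • H₀) u = dot H₁ u - a * dot H₀ u := by
  simp only [dot, Pi.sub_apply, Pi.smul_apply, smul_eq_mul, sub_mul, Finset.sum_sub_distrib,
    Finset.mul_sum]
  congr 1
  exact Finset.sum_congr rfl fun i _ => by ring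

private lemma dot_self_eq_zero {d : ℕ} {b : Fin d → ℝ} (h : dot b b = 0) : b = 0 := by
  have h' : ∀ i ∈ Finset.univ, b i * b i = 0 := by
    simp only [dot] at h
    rw [Finset.sum_eq_zero_iff_of_nonneg (fun i _ => mul_self_nonneg (b i))] at h
    exact h
  funext i
  simpa [mul_self_eq_zero] using h' i (Finset.mem_univ i)

private def memCone {d : ℕ} : List (Fin d → ℝ) → (Fin d → ℝ) → Prop
  | [], b => b = 0
  | v :: L, b => ∃ t : ℝ, 0 ≤ t ∧ memCone L (b - t • v)

private lemma memCone_unshift {d : ℕ} (v : Fin d → ℝ) (g : (Fin d → ℝ) → ℝ) :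
    ∀ (L : List (Fin d → ℝ)) (b : Fin d → ℝ),
      memCone (L.map (fun u => u - g u • v)) b →
      (∀ u ∈ L, g u ≤ 0) →
      ∃ s : ℝ, s ≤ 0 ∧ memCone L (b + s • v)
  | [], b, hb, _ => ⟨0, le_refl 0, by simpa [memCone] using hb⟩
  | u :: L, b, hb, hg => by
    obtain ⟨t, ht, hmem⟩ := hb
    have hrw : b - t • (u - g u • v) = (b - t • u + (t * g u) • v) := by
      module
    rw [hrw] at hmem
    obtain ⟨s, hs, h2⟩ := memCone_unshift v g L (b - t • u + (t * g u) • v) hmem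
      (fun x hx => hg x (List.mem_cons_of_mem _ hx))
    have hgu : g u ≤ 0 := hg u List.mem_cons_self
    refine ⟨t * g u + s, by nlinarith, t, ht, ?_⟩
    have : b + (t * g u + s) • v - t • u = b - t • u + (t * g u) • v + s • v := by
      module
    rw [this]
    exact h2

private lemma farkasAux {d : ℕ} :
    ∀ (n : ℕ) (L : List (Fin d → ℝ)), L.length ≤ n →
      ∀ b : Fin d → ℝ,
        (∀ H : Fin d → ℝ, (∀ u ∈ L, 0 ≤ dot H u) → 0 ≤ dot H b) → memCone L b := by
  intro n
  induction n with
  | zero =>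
    intro L hL b h
    have hLnil : L = [] := List.eq_nil_of_length_eq_zero (Nat.le_zero.mp hL)
    subst hLnil
    have h1 := h (-b) (by simp)
    have h2 : dot (-b) b = -dot b b := by
      simp [dot, Finset.sum_neg_distrib]
    have h3 : dot b b ≤ 0 := by rw [h2] at h1; linarith
    have h4 : 0 ≤ dot b b := Finset.sum_nonneg fun i _ => mul_self_nonneg _
    exact dot_self_eq_zero (le_antisymm h3 h4)
  | succ n ih =>
    intro L hL b h
    rcases L with _ | ⟨v, L⟩
    · exact ih [] (Nat.zero_le _) b h
    · by_cases hLb : memCone L b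
      · exact ⟨0, le_refl 0, by simpa using hLb⟩
      · have hlen : L.length ≤ n := by simpa using hL
        have hnot : ¬ (∀ H : Fin d → ℝ, (∀ u ∈ L, 0 ≤ dot H u) → 0 ≤ dot H b) :=
          fun hh => hLb (ih L hlen b hh)
        push_neg at hnot
        obtain ⟨H₀, hH₀L, hH₀b⟩ := hnot
        have hH₀v : dot H₀ v < 0 := by
          by_contra hv
          push_neg at hv
          have := h H₀ (by
            intro u hu
            rcases List.mem_cons.mp hu with h' | h'
            · rw [h']; exact hv
            · exact hH₀L u h')
          linarith
        have hH₀v' : dot H₀ v ≠ 0 := ne_of_lt hH₀v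
        set g : (Fin d → ℝ) → ℝ := fun u => dot H₀ u / dot H₀ v with hgdef
        have key : memCone (L.map (fun u => u - g u • v)) (b - g b • v) := by
          apply ih _ (by simpa using hlen)
          intro H₁ hH₁
          set c : ℝ := dot H₁ v / dot H₀ v with hcdef
          have hdotv : dot (H₁ - c • H₀) v = 0 := by
            rw [dot_sub_smul_left, hcdef, div_mul_cancel₀ _ hH₀v']
            ring
          have hdoteq : ∀ u : Fin d → ℝ, dot (H₁ - c • H₀) u = dot H₁ (u - g u • v) := by
            intro u
            rw [dot_sub_smul_left, dot_sub_smul, hcdef, hgdef]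
            field_simp
          have hmain := h (H₁ - c • H₀) (by
            intro u hu
            rcases List.mem_cons.mp hu with h' | h'
            · rw [h', hdotv]
            · rw [hdoteq u]
              exact hH₁ _ (List.mem_map_of_mem h'))
          rw [hdoteq b] at hmain
          exact hmain
        have hgle : ∀ u ∈ L, g u ≤ 0 := by
          intro u hu
          exact div_nonpos_of_nonneg_of_nonpos (hH₀L u hu) (le_of_lt hH₀v)
        obtain ⟨s, hs, hmem⟩ := memCone_unshift v g L (b - g b • v) key hgle
        have hgb : 0 < g b := div_pos_of_neg_of_neg hH₀b hH₀v
        refine ⟨g b - s, by linarith, ?_⟩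
        have : b - (g b - s) • v = b - g b • v + s • v := by module
        rw [this]
        exact hmem

private lemma memCone_extract {d : ℕ} {X : Type} [DecidableEq X] (v : X → Fin d → ℝ) :
    ∀ (l : List X) (b : Fin d → ℝ), l.Nodup → memCone (l.map v) b →
      ∃ c : X → ℝ, (∀ x, 0 ≤ c x) ∧ b = ∑ x ∈ l.toFinset, c x • v x
  | [], b, _, hb => ⟨0, fun _ => le_refl 0, by simpa [memCone] using hb⟩
  | x :: l, b, hnd, hb => by
    classical
    obtain ⟨t, ht, hmem⟩ := hb
    obtain ⟨c, hc, hsum⟩ := memCone_extract v l (b - t • v x) (List.Nodup.of_cons hnd) hmem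
    have hxl : x ∉ l := (List.nodup_cons.mp hnd).1
    refine ⟨Function.update c x t, ?_, ?_⟩
    · intro y
      rcases eq_or_ne y x with rfl | hy
      · simpa using ht
      · simpa [Function.update_of_ne hy] using hc y
    · rw [List.toFinset_cons, Finset.sum_insert (by simpa using hxl)]
      have hcongr : ∀ y ∈ l.toFinset, Function.update c x t y • v y = c y • v y := by
        intro y hy
        have : y ≠ x := fun h => hxl (h ▸ List.mem_toFinset.mp hy)
        rw [Function.update_of_ne this]
      rw [Finset.sum_congr rfl hcongr, Function.update_self, ← hsum]
      module

/-- One-step pointwise FTAP charging a given scenario: if every `H` with nonnegative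
gains on `Ω` has identically zero gains on `Ω`, then there is a finitely supported
one-step martingale measure concentrated on `Ω` charging `ω*`. -/
theorem stmt14 {X : Type} [Fintype X] (d : ℕ)
    (S₀ : Fin d → ℝ) (S₁ : X → Fin d → ℝ) (Ω : Set X)
    (ωs : X) (hωs : ωs ∈ Ω)
    (hNA : ∀ H : Fin d → ℝ,
      (∀ ω ∈ Ω, 0 ≤ ∑ i, H i * (S₁ ω i - S₀ i)) →
      ∀ ω ∈ Ω, ∑ i, H i * (S₁ ω i - S₀ i) = 0) :
    ∃ Q : X → ℝ, (∀ ω, 0 ≤ Q ω) ∧ (∑ ω, Q ω = 1) ∧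
      (∀ ω, Q ω ≠ 0 → ω ∈ Ω) ∧ 0 < Q ωs ∧
      ∀ i, ∑ ω, Q ω * S₁ ω i = S₀ i := by
  classical
  set v : X → Fin d → ℝ := fun ω i => S₁ ω i - S₀ i with hv
  set T : Finset X := Finset.univ.filter (· ∈ Ω) with hT
  have hmemT : ∀ x, x ∈ T ↔ x ∈ Ω := by
    intro x; simp [hT]
  have hωsT : ωs ∈ T := (hmemT ωs).mpr hωs
  -- Farkas hypothesis
  have hfark : memCone (T.toList.map v) (-(v ωs)) := by
    apply farkasAux (T.toList.map v).length _ (le_refl _)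
    intro H hH
    have hHΩ : ∀ ω ∈ Ω, 0 ≤ ∑ i, H i * (S₁ ω i - S₀ i) := by
      intro ω hω
      exact hH (v ω) (List.mem_map_of_mem (Finset.mem_toList.mpr ((hmemT ω).mpr hω)))
    have := hNA H hHΩ ωs hωs
    have hz : dot H (v ωs) = 0 := this
    have : dot H (-(v ωs)) = -dot H (v ωs) := by
      simp [dot, Finset.sum_neg_distrib]
    rw [this, hz]
    simp
  obtain ⟨c, hc, hsum⟩ := memCone_extract v T.toList (-(v ωs)) (Finset.nodup_toList T) hfark
  rw [Finset.toList_toFinset] at hsum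
  -- the unnormalized measure
  set lam : X → ℝ := fun x => (if x = ωs then 1 else 0) + c x with hlam
  have hlam_nonneg : ∀ x, 0 ≤ lam x := by
    intro x
    have := hc x
    rcases eq_or_ne x ωs with rfl | h
    · simp only [hlam, if_pos rfl, if_true, eq_self_iff_true]
      linarith
    · simp only [hlam, if_neg h]
      linarith
  have hlam_sum_v : ∑ x ∈ T, lam x • v x = 0 := by
    have h1 : ∑ x ∈ T, lam x • v x
        = ∑ x ∈ T, (if x = ωs then 1 else 0 : ℝ) • v x + ∑ x ∈ T, c x • v x := by
      rw [← Finset.sum_add_distrib]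
      apply Finset.sum_congr rfl
      intro x _
      rw [hlam]
      module
    have h2 : ∑ x ∈ T, (if x = ωs then 1 else 0 : ℝ) • v x = v ωs := by
      rw [Finset.sum_congr rfl (fun x _ => by
        rw [ite_smul, one_smul, zero_smul])]
      simp [Finset.sum_ite_eq' T ωs v, hωsT]
    rw [h1, h2, ← hsum]
    simp
  set A : ℝ := ∑ x ∈ T, lam x with hA
  have hA1 : (1 : ℝ) ≤ A := by
    have hle : lam ωs ≤ A := Finset.single_le_sum (fun x _ => hlam_nonneg x) hωsT
    have : (1 : ℝ) ≤ lam ωs := by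
      have := hc ωs
      simp [hlam]
      linarith
    linarith
  have hApos : 0 < A := lt_of_lt_of_le one_pos hA1
  refine ⟨fun x => if x ∈ T then lam x / A else 0, ?_, ?_, ?_, ?_, ?_⟩
  · intro ω
    by_cases h : ω ∈ T
    · simp only [if_pos h]
      exact div_nonneg (hlam_nonneg ω) (le_of_lt hApos)
    · simp [h]
  · rw [Finset.sum_ite_mem, Finset.univ_inter, ← Finset.sum_div, ← hA, div_self (ne_of_gt hApos)]
  · intro ω hω
    by_cases h : ω ∈ T
    · exact (hmemT ω).mp h
    · exact absurd (by simp [h]) hω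
  · show 0 < if ωs ∈ T then lam ωs / A else 0
    rw [if_pos hωsT]
    apply div_pos _ hApos
    have := hc ωs
    simp [hlam]
    linarith
  · intro i
    have hzero : ∑ x ∈ T, lam x * v x i = 0 := by
      have := congrFun hlam_sum_v i
      simpa [Finset.sum_apply] using this
    have hstep : ∑ ω, (if ω ∈ T then lam ω / A else 0) * S₁ ω i
        = ∑ ω ∈ T, (lam ω / A) * S₁ ω i := by
      simp only [ite_mul, zero_mul]
      rw [Finset.sum_ite_mem, Finset.univ_inter]
    rw [hstep]
    have hsplit : ∀ ω, (lam ω / A) * S₁ ω i = (lam ω * v ω i) / A + (lam ω / A) * S₀ i := by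
      intro ω
      have : S₁ ω i = v ω i + S₀ i := by simp [hv]
      rw [this]
      field_simp
    rw [Finset.sum_congr rfl (fun ω _ => hsplit ω), Finset.sum_add_distrib, ← Finset.sum_div,
      hzero, ← Finset.sum_mul, ← Finset.sum_div, ← hA, div_self (ne_of_gt hApos)]
    simp
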